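/- In any totally real number field K, the only decompositions of 2 as a sum α + β with α, β totally positive algebraic integers or zero are the trivial ones: 2 = 1 + 1 and 2 = 0 + 2. -/
import Mathlib


open NumberField

/-- In any totally real number field `K`, the only decompositions of `2` as `α + β` with
`α, β` totally positive algebraic integers or zero are `2 = 1 + 1` and `2 = 0 + 2`. -/
theorem stmt_3 {K : Type*} [Field K] [NumberField K]
    (hreal : ∀ v : InfinitePlace K, v.IsReal)
    (α β : 𝓞 K)
    (hα : ∀ φ : K →+* ℝ, 0 ≤ φ (α : K))
    (hβ : ∀ φ : K →+* ℝ, 0 ≤ φ (β : K))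
    (h : α + β = 2) :
    (α = 1 ∧ β = 1) ∨ (α = 0 ∧ β = 2) ∨ (α = 2 ∧ β = 0) := by
  -- every ℚ-algebra embedding into ℂ is real
  have hre : ∀ σ : K →ₐ[ℚ] ℂ, ComplexEmbedding.IsReal (σ : K →+* ℂ) := fun σ =>
    InfinitePlace.isReal_mk_iff.mp (hreal (InfinitePlace.mk (σ : K →+* ℂ)))
  -- the real embedding associated to σ
  set ψ : (K →ₐ[ℚ] ℂ) → (K →+* ℝ) := fun σ => (hre σ).embedding with hψ
  have hψval : ∀ (σ : K →ₐ[ℚ] ℂ) (x : K), (σ x : ℂ) = ((ψ σ x : ℝ) : ℂ) := fun σ x =>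
    (ComplexEmbedding.IsReal.coe_embedding_apply (hre σ) x).symm
  have hsum : ∀ σ : K →ₐ[ℚ] ℂ, ψ σ (α : K) + ψ σ (β : K) = 2 := by
    intro σ
    have h2 : ((α : K)) + ((β : K)) = (2 : K) := by
      have := congrArg (algebraMap (𝓞 K) K) h
      push_cast at this; exact this
    have := congrArg (ψ σ) h2
    simpa [map_ofNat] using this
  -- each factor is in [0,1]
  have hfac0 : ∀ σ : K →ₐ[ℚ] ℂ, 0 ≤ ψ σ (α : K) * ψ σ (β : K) := fun σ =>
    mul_nonneg (hα _) (hβ _)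
  have hfac1 : ∀ σ : K →ₐ[ℚ] ℂ, ψ σ (α : K) * ψ σ (β : K) ≤ 1 := by
    intro σ
    have h1 := hα (ψ σ); have h2 := hβ (ψ σ); have h3 := hsum σ
    nlinarith [sq_nonneg (ψ σ (α : K) - ψ σ (β : K))]
  -- the norm of α*β as an integer
  set n : ℤ := Algebra.norm ℤ (α * β) with hn
  have hnormℚ : ((n : ℚ) : ℂ) = ∏ σ : K →ₐ[ℚ] ℂ, σ ((α : K) * (β : K)) := by
    rw [hn, Algebra.coe_norm_int]
    push_cast
    exact_mod_cast Algebra.norm_eq_prod_embeddings ℚ ℂ ((α : K) * (β : K))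
  have hnormℝ : (n : ℝ) = ∏ σ : K →ₐ[ℚ] ℂ, ψ σ (α : K) * ψ σ (β : K) := by
    have : ((n : ℝ) : ℂ) = ((∏ σ : K →ₐ[ℚ] ℂ, ψ σ (α : K) * ψ σ (β : K) : ℝ) : ℂ) := by
      push_cast
      rw [show ((n : ℤ) : ℂ) = (((n : ℚ)) : ℂ) by push_cast; ring, hnormℚ]
      refine Finset.prod_congr rfl fun σ _ => ?_
      rw [map_mul, hψval σ, hψval σ]
    exact_mod_cast this
  have hn0 : (0 : ℝ) ≤ (n : ℝ) := by
    rw [hnormℝ]; exact Finset.prod_nonneg fun σ _ => hfac0 σ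
  have hn1 : (n : ℝ) ≤ 1 := by
    rw [hnormℝ]; exact Finset.prod_le_one (fun σ _ => hfac0 σ) (fun σ _ => hfac1 σ)
  have hncase : n = 0 ∨ n = 1 := by
    have h0 : (0 : ℤ) ≤ n := by exact_mod_cast hn0
    have h1 : n ≤ 1 := by exact_mod_cast hn1
    omega
  classical
  rcases hncase with h0 | h1
  · -- norm zero: α*β = 0
    have : Algebra.norm ℚ (((α * β : 𝓞 K) : K)) = 0 := by
      rw [← Algebra.coe_norm_int, ← hn, h0]; norm_num
    have hab : ((α * β : 𝓞 K) : K) = 0 := by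
      by_contra hne
      exact hne ((Algebra.norm_eq_zero_iff).mp this)
    have hab' : α * β = 0 := by exact_mod_cast hab
    rcases mul_eq_zero.mp hab' with ha | hb
    · right; left; constructor
      · exact ha
      · rw [ha, zero_add] at h; exact h
    · right; right; constructor
      · rw [hb, add_zero] at h; exact h
      · exact hb
  · -- norm one: each factor equals 1, so α = 1
    left
    have hall : ∀ σ : K →ₐ[ℚ] ℂ, ψ σ (α : K) * ψ σ (β : K) = 1 := by
      intro σ
      by_contra hne
      have hlt : ψ σ (α : K) * ψ σ (β : K) < 1 := lt_of_le_of_ne (hfac1 σ) hne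
      have : (n : ℝ) < 1 := by
        rw [hnormℝ, ← Finset.mul_prod_erase Finset.univ _ (Finset.mem_univ σ)]
        calc ψ σ (α : K) * ψ σ (β : K) *
              ∏ τ ∈ Finset.univ.erase σ, ψ τ (α : K) * ψ τ (β : K)
            ≤ ψ σ (α : K) * ψ σ (β : K) * 1 := by
              apply mul_le_mul_of_nonneg_left _ (hfac0 σ)
              exact Finset.prod_le_one (fun τ _ => hfac0 τ) (fun τ _ => hfac1 τ)
          _ < 1 := by rw [mul_one]; exact hlt
      rw [h1] at this; norm_num at this
    have hαone : ∀ σ : K →ₐ[ℚ] ℂ, ψ σ (α : K) = 1 := by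
      intro σ
      have h1' := hall σ; have h2 := hsum σ
      have h3 := hα (ψ σ)
      nlinarith [sq_nonneg (ψ σ (α : K) - 1)]
    have hnormδ : Algebra.norm ℚ ((α : K) - 1) = 0 := by
      have : ((Algebra.norm ℚ ((α : K) - 1) : ℚ) : ℂ) =
          ∏ σ : K →ₐ[ℚ] ℂ, σ ((α : K) - 1) := by
        exact_mod_cast Algebra.norm_eq_prod_embeddings ℚ ℂ ((α : K) - 1)
      have hz : ∏ σ : K →ₐ[ℚ] ℂ, σ ((α : K) - 1) = 0 := by
        have hc : 0 < Fintype.card (K →ₐ[ℚ] ℂ) := by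
          rw [AlgHom.card]; exact Module.finrank_pos
        obtain ⟨σ0⟩ := Fintype.card_pos_iff.mp hc
        apply Finset.prod_eq_zero (Finset.mem_univ σ0)
        rw [map_sub, hψval, hαone, map_one]; norm_num
      rw [hz] at this
      exact_mod_cast this
    have hδ : (α : K) - 1 = 0 := by
      by_contra hne
      exact hne ((Algebra.norm_eq_zero_iff).mp hnormδ)
    have hα1 : α = 1 := by
      have : (α : K) = 1 := sub_eq_zero.mp hδ
      exact_mod_cast this
    constructor
    · exact hα1
    · rw [hα1] at h; linear_combination h
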